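/- Let α, β be n-tuples of nonnegative integers with Σᵢ αᵢ = Σᵢ βᵢ = m ≥ 1 and ‖α − β‖₂ = √2 (viewing α, β as vectors in ℝⁿ). Then the normalized vectors satisfy ‖α/‖α‖₂ − β/‖β‖₂‖₂ ≤ 2√(2n)/m. -/

import Mathlib

lemma norm_normalize_sub {E : Type*} [NormedAddCommGroup E] [NormedSpace ℝ E]
    (x y : E) (hx : x ≠ 0) (hy : y ≠ 0) :
    ‖‖x‖⁻¹ • x - ‖y‖⁻¹ • y‖ ≤ 2 * ‖x - y‖ / ‖x‖ := by
  have ha : (0:ℝ) < ‖x‖ := norm_pos_iff.mpr hx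
  have hb : (0:ℝ) < ‖y‖ := norm_pos_iff.mpr hy
  have hsplit : ‖x‖⁻¹ • x - ‖y‖⁻¹ • y
      = ‖x‖⁻¹ • (x - y) + (‖x‖⁻¹ - ‖y‖⁻¹) • y := by
    rw [smul_sub, sub_smul]
    abel
  rw [hsplit]
  have h1 : ‖‖x‖⁻¹ • (x - y)‖ = ‖x - y‖ / ‖x‖ := by
    rw [norm_smul, norm_inv, norm_norm]; ring
  have h2 : ‖(‖x‖⁻¹ - ‖y‖⁻¹) • y‖ ≤ ‖x - y‖ / ‖x‖ := by
    rw [norm_smul, Real.norm_eq_abs]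
    have : |‖x‖⁻¹ - ‖y‖⁻¹| = |‖y‖ - ‖x‖| / (‖x‖ * ‖y‖) := by
      rw [← abs_of_pos (show (0:ℝ) < ‖x‖ * ‖y‖ by positivity), ← abs_div]
      congr 1
      field_simp
    rw [this]
    have hle : |‖y‖ - ‖x‖| ≤ ‖x - y‖ := by
      rw [abs_sub_comm]
      simpa using abs_norm_sub_norm_le x y
    calc |‖y‖ - ‖x‖| / (‖x‖ * ‖y‖) * ‖y‖ = |‖y‖ - ‖x‖| / ‖x‖ := by
          field_simp
      _ ≤ ‖x - y‖ / ‖x‖ := by gcongr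
  calc ‖‖x‖⁻¹ • (x - y) + (‖x‖⁻¹ - ‖y‖⁻¹) • y‖
      ≤ ‖‖x‖⁻¹ • (x - y)‖ + ‖(‖x‖⁻¹ - ‖y‖⁻¹) • y‖ := norm_add_le _ _
    _ ≤ ‖x - y‖ / ‖x‖ + ‖x - y‖ / ‖x‖ := by rw [h1]; linarith [h2]
    _ = 2 * ‖x - y‖ / ‖x‖ := by ring

theorem normalized_lattice_points_close (n m : ℕ) (hm : 0 < m)
    (α β : EuclideanSpace ℝ (Fin n))
    (hαint : ∀ i, ∃ k : ℕ, α i = k) (hβint : ∀ i, ∃ k : ℕ, β i = k)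
    (hαsum : ∑ i, α i = m) (hβsum : ∑ i, β i = m)
    (hdist : ‖α - β‖^2 = 2) :
    ‖(‖α‖⁻¹ • α) - (‖β‖⁻¹ • β)‖ ≤ 2 * Real.sqrt (2*n) / m := by
  have hm' : (0:ℝ) < m := by exact_mod_cast hm
  -- lower bound on norms via Cauchy-Schwarz
  have key : ∀ γ : EuclideanSpace ℝ (Fin n), (∑ i, γ i = m) → (m:ℝ) ≤ Real.sqrt n * ‖γ‖ := by
    intro γ hγ
    have hsq : ‖γ‖^2 = ∑ i, γ i ^ 2 := by
      rw [EuclideanSpace.norm_eq, Real.sq_sqrt (by positivity)]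
      simp [Real.norm_eq_abs, sq_abs]
    have hcs : ((m:ℝ))^2 ≤ n * ‖γ‖^2 := by
      rw [hsq, ← hγ]
      simpa using sq_sum_le_card_mul_sum_sq (s := Finset.univ) (f := γ)
    have : ((m:ℝ))^2 ≤ (Real.sqrt n * ‖γ‖)^2 := by
      rwa [mul_pow, Real.sq_sqrt (by positivity)]
    have h := Real.sqrt_le_sqrt this
    rwa [Real.sqrt_sq hm'.le, Real.sqrt_sq (by positivity)] at h
  have hαb := key α hαsum
  have hβb := key β hβsum
  have hα0 : α ≠ 0 := by
    intro h; rw [h] at hαsum; simp at hαsum; exact hm.ne' (by exact_mod_cast hαsum.symm)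
  have hβ0 : β ≠ 0 := by
    intro h; rw [h] at hβsum; simp at hβsum; exact hm.ne' (by exact_mod_cast hβsum.symm)
  have ha : (0:ℝ) < ‖α‖ := norm_pos_iff.mpr hα0
  have hnorm : ‖α - β‖ = Real.sqrt 2 := by
    rw [← hdist, Real.sqrt_sq (norm_nonneg _)]
  calc ‖(‖α‖⁻¹ • α) - (‖β‖⁻¹ • β)‖ ≤ 2 * ‖α - β‖ / ‖α‖ := norm_normalize_sub α β hα0 hβ0
    _ = 2 * Real.sqrt 2 / ‖α‖ := by rw [hnorm]
    _ ≤ 2 * Real.sqrt (2*n) / m := by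
        rw [Real.sqrt_mul (by norm_num)]
        rw [div_le_div_iff₀ ha hm']
        have h2 : (0:ℝ) ≤ Real.sqrt 2 := Real.sqrt_nonneg _
        nlinarith [hαb, Real.sqrt_nonneg (n:ℝ)]
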